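/- arXiv:2104.13574 — 3 statements merged into one kernel-verified Lean document; each statement's English description precedes it below -/
import Mathlib

section
/- Fix c > 0. The function g defined on (0, ∞) by g(u) = (1/u)·∫ t over (0, c·u) of exp(-t²) is strictly antitone (strictly decreasing) on (0, ∞). -/
open MeasureTheory intervalIntegral

lemma exp_sq_intInt (a b : ℝ) :
    IntervalIntegrable (fun t : ℝ => Real.exp (-t ^ 2)) volume a b :=
  (Continuous.intervalIntegrable (by continuity) a b)

theorem stmt_8 (c : ℝ) (hc : 0 < c) :
    StrictAntiOn
      (fun u : ℝ => (1 / u) * ∫ t in Set.Ioo (0:ℝ) (c * u), Real.exp (-t ^ 2))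
      (Set.Ioi 0) := by
  intro a ha b hb hab
  simp only [Set.mem_Ioi] at ha hb
  have hca : 0 < c * a := mul_pos hc ha
  have hcab : c * a < c * b := by nlinarith
  -- rewrite set integrals as interval integrals
  have hrw : ∀ x : ℝ, 0 < x →
      (∫ t in Set.Ioo (0:ℝ) (c * x), Real.exp (-t ^ 2))
        = ∫ t in (0:ℝ)..(c * x), Real.exp (-t ^ 2) := by
    intro x hx
    rw [intervalIntegral.integral_of_le (by positivity : (0:ℝ) ≤ c * x),
      MeasureTheory.integral_Ioc_eq_integral_Ioo]
  set F : ℝ → ℝ := fun x => ∫ t in (0:ℝ)..x, Real.exp (-t ^ 2) with hF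
  have key1 : c * a * Real.exp (-(c * a) ^ 2) < F (c * a) := by
    have := intervalIntegral.integral_lt_integral_of_continuousOn_of_le_of_exists_lt
      (f := fun _ : ℝ => Real.exp (-(c * a) ^ 2))
      (g := fun t : ℝ => Real.exp (-t ^ 2)) (a := 0) (b := c * a) hca
      continuousOn_const (by fun_prop)
      (fun x hx => by
        apply Real.exp_le_exp.2
        have hx1 := hx.1; have hx2 := hx.2
        nlinarith)
      ⟨0, ⟨le_rfl, hca.le⟩, by
        show Real.exp (-(c * a) ^ 2) < Real.exp (-(0:ℝ) ^ 2)
        rw [Real.exp_lt_exp]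
        nlinarith⟩
    simpa using this
  have key2 : F (c * b) - F (c * a) ≤ (c * b - c * a) * Real.exp (-(c * a) ^ 2) := by
    have hsplit : F (c * b) - F (c * a)
        = ∫ t in (c * a)..(c * b), Real.exp (-t ^ 2) := by
      simp only [hF]
      rw [← intervalIntegral.integral_add_adjacent_intervals
        (exp_sq_intInt 0 (c * a)) (exp_sq_intInt (c * a) (c * b))]
      ring
    rw [hsplit]
    calc (∫ t in (c * a)..(c * b), Real.exp (-t ^ 2))
        ≤ ∫ _ in (c * a)..(c * b), Real.exp (-(c * a) ^ 2) := by
          apply intervalIntegral.integral_mono_on hcab.le (exp_sq_intInt _ _)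
            (intervalIntegrable_const)
          intro x hx
          apply Real.exp_le_exp.2
          have hx1 := hx.1
          nlinarith
      _ = (c * b - c * a) * Real.exp (-(c * a) ^ 2) := by
          simp [smul_eq_mul, mul_comm]
  simp only [hrw a ha, hrw b hb]
  rw [div_mul_eq_mul_div, div_mul_eq_mul_div, div_lt_div_iff₀ hb ha]
  have hFb : F (c * b) ≤ F (c * a) + (c * b - c * a) * Real.exp (-(c * a) ^ 2) := by
    linarith
  calc 1 * F (c * b) * a ≤ (F (c * a) + (c * b - c * a) * Real.exp (-(c * a) ^ 2)) * a := by
        nlinarith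
    _ < 1 * F (c * a) * b := by nlinarith [Real.exp_pos (-(c * a) ^ 2)]
end

section
/- Fix λ > 0 and c > 0, and define Θ : (0, ∞) → ℝ by Θ(Γ) = (2π/√Γ)·∫ t over (0, c·√Γ) of exp(-t²). Then the function Γ ↦ (1 - exp(-λ·Θ(Γ)))/Θ(Γ) is strictly monotone increasing on (0, ∞). -/
open MeasureTheory intervalIntegral Real

private lemma theta_eq (c : ℝ) (hc : 0 < c) {Γ : ℝ} (hΓ : 0 < Γ) :
    (2 * Real.pi / Real.sqrt Γ) * ∫ t in Set.Ioo (0:ℝ) (c * Real.sqrt Γ), Real.exp (-t ^ 2)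
      = 2 * Real.pi * c * ∫ u in (0:ℝ)..1, Real.exp (-(c ^ 2 * Γ) * u ^ 2) := by
  have hs : 0 < Real.sqrt Γ := Real.sqrt_pos.2 hΓ
  set a := c * Real.sqrt Γ with ha
  have haa : 0 < a := mul_pos hc hs
  have hsq : a ^ 2 = c ^ 2 * Γ := by
    rw [ha, mul_pow, Real.sq_sqrt hΓ.le]
  have hfun : (fun u : ℝ => Real.exp (-(c ^ 2 * Γ) * u ^ 2))
      = fun u : ℝ => Real.exp (-(a * u) ^ 2) := by
    funext u
    congr 1
    rw [mul_pow, hsq]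
    ring
  have h1 : (∫ t in Set.Ioo (0:ℝ) a, Real.exp (-t ^ 2))
      = ∫ t in (0:ℝ)..a, Real.exp (-t ^ 2) := by
    rw [intervalIntegral.integral_of_le haa.le, MeasureTheory.integral_Ioc_eq_integral_Ioo]
  have h2 : (a * ∫ u in (0:ℝ)..1, Real.exp (-(c ^ 2 * Γ) * u ^ 2))
      = ∫ t in (0:ℝ)..a, Real.exp (-t ^ 2) := by
    rw [hfun]
    have := intervalIntegral.mul_integral_comp_mul_left (a := (0:ℝ)) (b := 1)
      (f := fun t => Real.exp (-t ^ 2)) (c := a)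
    simpa using this
  rw [h1, ← h2]
  field_simp
  ring

private lemma inner_pos (c Γ : ℝ) : 0 < ∫ u in (0:ℝ)..1, Real.exp (-(c ^ 2 * Γ) * u ^ 2) := by
  apply intervalIntegral.intervalIntegral_pos_of_pos
  · exact (Continuous.intervalIntegrable (by continuity) 0 1)
  · intro x; exact Real.exp_pos _
  · norm_num

private lemma inner_anti (c : ℝ) (hc : 0 < c) :
    StrictAntiOn (fun Γ : ℝ => ∫ u in (0:ℝ)..1, Real.exp (-(c ^ 2 * Γ) * u ^ 2))
      (Set.Ioi 0) := by
  intro x hx y hy hxy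
  simp only [Set.mem_Ioi] at hx hy
  apply intervalIntegral.integral_lt_integral_of_continuousOn_of_le_of_exists_lt
    (by norm_num : (0:ℝ) < 1)
  · exact Continuous.continuousOn (by continuity)
  · exact Continuous.continuousOn (by continuity)
  · intro u hu
    apply Real.exp_le_exp.2
    have h := mul_le_mul_of_nonneg_right
      (mul_le_mul_of_nonneg_left hxy.le (sq_nonneg c)) (sq_nonneg u)
    nlinarith [h]
  · refine ⟨1, by norm_num, ?_⟩
    apply Real.exp_lt_exp.2
    have := mul_lt_mul_of_pos_left hxy (pow_pos hc 2)
    nlinarith [this]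

private lemma F_anti (l : ℝ) (hl : 0 < l) :
    StrictAntiOn (fun θ : ℝ => (1 - Real.exp (-l * θ)) / θ) (Set.Ioi 0) := by
  have hderiv : ∀ θ ∈ Set.Ioi (0:ℝ),
      HasDerivAt (fun θ : ℝ => (1 - Real.exp (-l * θ)) / θ)
        ((l * Real.exp (-l * θ) * θ - (1 - Real.exp (-l * θ))) / θ ^ 2) θ := by
    intro θ hθ
    have hθ0 : θ ≠ 0 := ne_of_gt hθ
    have h1 : HasDerivAt (fun θ : ℝ => 1 - Real.exp (-l * θ)) (l * Real.exp (-l * θ)) θ := by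
      have h2 : HasDerivAt (fun θ : ℝ => -l * θ) (-l) θ := by
        simpa using (hasDerivAt_id θ).const_mul (-l)
      have h3 := (h2.exp).const_sub 1
      refine h3.congr_deriv ?_
      ring
    have := h1.div (hasDerivAt_id θ) hθ0
    refine this.congr_deriv ?_
    simp
  apply strictAntiOn_of_deriv_neg (convex_Ioi 0)
  · apply ContinuousOn.div
    · exact Continuous.continuousOn (by continuity)
    · exact continuousOn_id
    · intro x hx; exact ne_of_gt hx
  · intro θ hθ
    rw [interior_Ioi] at hθ
    have hθ' : (0:ℝ) < θ := hθ
    rw [(hderiv θ hθ).deriv]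
    apply div_neg_of_neg_of_pos _ (pow_pos hθ' 2)
    have hep : 0 < Real.exp (l * θ) := Real.exp_pos _
    have key : l * θ + 1 < Real.exp (l * θ) :=
      Real.add_one_lt_exp (ne_of_gt (mul_pos hl hθ'))
    have he : Real.exp (-l * θ) = (Real.exp (l * θ))⁻¹ := by
      rw [← Real.exp_neg]; ring_nf
    have h2 : (l * θ + 1) * (Real.exp (l * θ))⁻¹ < 1 := by
      have := mul_lt_mul_of_pos_right key (inv_pos.2 hep)
      rwa [mul_inv_cancel₀ (ne_of_gt hep)] at this
    rw [he]
    nlinarith [h2]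

theorem stmt_9 (l c : ℝ) (hl : 0 < l) (hc : 0 < c) :
    StrictMonoOn
      (fun Γ : ℝ =>
        (1 - Real.exp (-l * ((2 * Real.pi / Real.sqrt Γ) *
            ∫ t in Set.Ioo (0:ℝ) (c * Real.sqrt Γ), Real.exp (-t ^ 2)))) /
          ((2 * Real.pi / Real.sqrt Γ) *
            ∫ t in Set.Ioo (0:ℝ) (c * Real.sqrt Γ), Real.exp (-t ^ 2)))
      (Set.Ioi 0) := by
  have hconst : 0 < 2 * Real.pi * c := by positivity
  set g : ℝ → ℝ := fun Γ => 2 * Real.pi * c * ∫ u in (0:ℝ)..1, Real.exp (-(c ^ 2 * Γ) * u ^ 2)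
    with hg
  have hganti : StrictAntiOn g (Set.Ioi 0) := by
    intro x hx y hy hxy
    exact mul_lt_mul_of_pos_left (inner_anti c hc hx hy hxy) hconst
  have hgpos : ∀ Γ : ℝ, 0 < g Γ := fun Γ => mul_pos hconst (inner_pos c Γ)
  have hmaps : Set.MapsTo g (Set.Ioi 0) (Set.Ioi 0) := fun Γ _ => Set.mem_Ioi.2 (hgpos Γ)
  have hcomp := (F_anti l hl).comp hganti hmaps
  intro x hx y hy hxy
  have h := hcomp hx hy hxy
  simp only [Function.comp, hg] at h
  simp only [theta_eq c hc (Set.mem_Ioi.1 hx), theta_eq c hc (Set.mem_Ioi.1 hy)]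
  exact h
end

section
/- For all real numbers λ > 0 and n > 0, the integral of r·(2·(λ·π)^n·r^(2n-1)·exp(-λ·π·r²)/Γ(n)) for r ranging over (0, ∞) equals Γ(n + 1/2)/(Γ(n)·√(λ·π)), where Γ denotes the real Gamma function. -/
theorem stmt_13 (l n : ℝ) (hl : 0 < l) (hn : 0 < n) :
    (∫ r in Set.Ioi (0:ℝ),
        r * (2 * (l * Real.pi) ^ n * r ^ (2 * n - 1) * Real.exp (-l * Real.pi * r ^ 2) /
          Real.Gamma n)) =
      Real.Gamma (n + 1 / 2) / (Real.Gamma n * Real.sqrt (l * Real.pi)) := by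
  have hb : 0 < l * Real.pi := by positivity
  have hq : (-1 : ℝ) < 2 * n := by linarith
  have key := integral_rpow_mul_exp_neg_mul_rpow (p := 2) (q := 2 * n) (b := l * Real.pi)
    two_pos hq hb
  have hcong : (∫ r in Set.Ioi (0:ℝ),
      r * (2 * (l * Real.pi) ^ n * r ^ (2 * n - 1) * Real.exp (-l * Real.pi * r ^ 2) /
        Real.Gamma n)) =
      (2 * (l * Real.pi) ^ n / Real.Gamma n) *
        ∫ r in Set.Ioi (0:ℝ), r ^ (2 * n) * Real.exp (-(l * Real.pi) * r ^ (2:ℝ)) := by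
    rw [← MeasureTheory.integral_const_mul]
    refine MeasureTheory.setIntegral_congr_fun measurableSet_Ioi (fun x hx => ?_)
    have hx : (0:ℝ) < x := hx
    rw [Real.rpow_two, sq, show (2:ℝ) * n = (2 * n - 1) + 1 by ring,
      Real.rpow_add hx, Real.rpow_one]
    rw [show (2 * n - 1 + 1 - 1 : ℝ) = 2 * n - 1 by ring, neg_mul l Real.pi]
    ring
  rw [hcong, key]
  have hG : 0 < Real.Gamma n := Real.Gamma_pos_of_pos hn
  have h1 : (-(2 * n + 1) / 2 : ℝ) = -n + (-(1/2)) := by ring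
  have h2 : ((2 * n + 1) / 2 : ℝ) = n + 1/2 := by ring
  rw [h1, h2, Real.rpow_add hb, Real.sqrt_eq_rpow]
  rw [Real.rpow_neg hb.le n, Real.rpow_neg hb.le (1/2)]
  have hpn : (l * Real.pi) ^ n ≠ 0 := (Real.rpow_pos_of_pos hb n).ne'
  have hph : (l * Real.pi) ^ ((1:ℝ)/2) ≠ 0 := (Real.rpow_pos_of_pos hb _).ne'
  field_simp
end
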